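/- Let V₁, V₂ be subspaces of ℂ^n and W = V₂ ∩ V₁^⊥. Then Π_{V₂}^⊥ ∘ Π_{V₁}^⊥ = Π_{V₂ ∩ W^⊥}^⊥ ∘ Π_{W ⊕ V₁}^⊥, where Π_V^⊥ = 1 − Π_V denotes orthogonal projection onto V^⊥. -/

import Mathlib

noncomputable def projc {n : ℕ} (V : Submodule ℂ (EuclideanSpace ℂ (Fin n))) :
    EuclideanSpace ℂ (Fin n) →L[ℂ] EuclideanSpace ℂ (Fin n) :=
  V.subtypeL.comp (V.orthogonalProjection)

lemma projc_apply {n : ℕ} (V : Submodule ℂ (EuclideanSpace ℂ (Fin n))) (x) :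
    projc V x = (Submodule.orthogonalProjection V x : EuclideanSpace ℂ (Fin n)) := rfl

lemma projc_comp_eq_zero {n : ℕ} {U V : Submodule ℂ (EuclideanSpace ℂ (Fin n))}
    (h : U ≤ Vᗮ) : (projc U) * (projc V) = 0 := by
  ext x
  have hm : (Submodule.orthogonalProjection V x : EuclideanSpace ℂ (Fin n)) ∈ Uᗮ :=
    (Submodule.IsOrtho.symm h) (Submodule.orthogonalProjection V x).2
  simp [ContinuousLinearMap.mul_apply, projc_apply,
    Submodule.orthogonalProjectionOnto_apply_of_mem_orthogonal hm,
    ((Submodule.starProjection_apply_eq_zero_iff U).mpr hm : U.starProjection (V.starProjection x) = 0)]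

lemma projc_sup {n : ℕ} {U V : Submodule ℂ (EuclideanSpace ℂ (Fin n))}
    (h : U ≤ Vᗮ) : projc (U ⊔ V) = projc U + projc V := by
  refine ContinuousLinearMap.ext fun x => ?_
  simp only [ContinuousLinearMap.add_apply, projc_apply]
  refine Submodule.eq_starProjection_of_mem_orthogonal (K := U ⊔ V) ?_ ?_
  · exact Submodule.add_mem_sup (Submodule.orthogonalProjection U x).2 (Submodule.orthogonalProjection V x).2
  · rw [← Submodule.inf_orthogonal]
    constructor
    · have h1 : x - Submodule.orthogonalProjection U x ∈ Uᗮ :=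
        Submodule.sub_starProjection_mem_orthogonal x
      have h2 : (Submodule.orthogonalProjection V x : EuclideanSpace ℂ (Fin n)) ∈ Uᗮ :=
        (Submodule.IsOrtho.symm h) (Submodule.orthogonalProjection V x).2
      have := Uᗮ.sub_mem h1 h2
      simpa [sub_sub] using this
    · have h1 : x - Submodule.orthogonalProjection V x ∈ Vᗮ :=
        Submodule.sub_starProjection_mem_orthogonal x
      have h2 : (Submodule.orthogonalProjection U x : EuclideanSpace ℂ (Fin n)) ∈ Vᗮ :=
        h (Submodule.orthogonalProjection U x).2
      have := Vᗮ.sub_mem h1 h2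
      simpa [sub_sub, add_comm] using this

set_option maxHeartbeats 1000000 in
theorem projPerp_comp_eq {n : ℕ} (V₁ V₂ : Submodule ℂ (EuclideanSpace ℂ (Fin n))) :
    (1 - projc V₂).comp (1 - projc V₁)
      = (1 - projc (V₂ ⊓ (V₂ ⊓ V₁ᗮ)ᗮ)).comp (1 - projc ((V₂ ⊓ V₁ᗮ) ⊔ V₁)) := by
  have hWV₁ : V₂ ⊓ V₁ᗮ ≤ V₁ᗮ := inf_le_right
  have hAW : V₂ ⊓ (V₂ ⊓ V₁ᗮ)ᗮ ≤ (V₂ ⊓ V₁ᗮ)ᗮ := inf_le_right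
  have hsplit : (V₂ ⊓ V₁ᗮ) ⊔ (V₂ ⊓ (V₂ ⊓ V₁ᗮ)ᗮ) = V₂ := by
    rw [inf_comm V₂ (V₂ ⊓ V₁ᗮ)ᗮ]
    exact Submodule.sup_orthogonal_inf_of_hasOrthogonalProjection (K₁ := V₂ ⊓ V₁ᗮ) (K₂ := V₂) inf_le_left
  have hP2 : projc V₂ = projc (V₂ ⊓ V₁ᗮ) + projc (V₂ ⊓ (V₂ ⊓ V₁ᗮ)ᗮ) := by
    have h := projc_sup (Submodule.IsOrtho.symm hAW)
    rwa [hsplit] at h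
  have hPB : projc ((V₂ ⊓ V₁ᗮ) ⊔ V₁) = projc (V₂ ⊓ V₁ᗮ) + projc V₁ := projc_sup hWV₁
  have e1 : projc (V₂ ⊓ V₁ᗮ) * projc V₁ = 0 := projc_comp_eq_zero hWV₁
  have e2 : projc (V₂ ⊓ (V₂ ⊓ V₁ᗮ)ᗮ) * projc (V₂ ⊓ V₁ᗮ) = 0 := projc_comp_eq_zero hAW
  rw [← ContinuousLinearMap.mul_def, ← ContinuousLinearMap.mul_def, hP2, hPB]
  simp only [mul_sub, sub_mul, mul_one, one_mul, add_mul, mul_add, e1, e2,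
    add_zero, zero_add]
  abel
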